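/- Suppose char(k) = 0. Then the k-hull k((F)) is a Rayner field (i.e. F satisfies (S2), (S3), (S5), (A1), (A3), (A4)) if and only if k((F)) is a Hahn field in k((G)). -/

import Mathlib

open scoped Pointwise

section RaynerAux
variable {G : Type*} [AddCommGroup G] [LinearOrder G] [IsOrderedAddMonoid G]

/-- Hahn series with prescribed coefficients supported in a WF set. -/
noncomputable def ofWF {R : Type*} [Zero R] (A : Set G) (hA : A.IsWF) (c : G → R) :
    HahnSeries G R where
  coeff := A.indicator c
  isPWO_support' := hA.isPWO.mono (by
    intro g hg
    by_contra h
    exact hg (Set.indicator_of_notMem h c))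

@[simp] lemma ofWF_coeff {R : Type*} [Zero R] (A : Set G) (hA : A.IsWF) (c : G → R) (g : G) :
    (ofWF A hA c).coeff g = A.indicator c g := rfl

lemma support_ofWF {R : Type*} [Zero R] (A : Set G) (hA : A.IsWF) (c : G → R) :
    (ofWF A hA c).support = A ∩ Function.support c :=
  Set.support_indicator

lemma singleton_add_eq_image (g : G) (S : Set G) :
    ({g} : Set G) + S = (fun x => x + g) '' S := by
  rw [Set.singleton_add]
  ext a
  simp only [Set.image_add_left, Set.mem_preimage, Set.mem_image]
  constructor
  · intro h; exact ⟨-g + a, h, by abel⟩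
  · rintro ⟨y, hy, rfl⟩; simpa [add_comm] using hy

lemma support_pow_subset_closure {R : Type*} [CommSemiring R] (x : HahnSeries G R) (n : ℕ) :
    (x ^ n).support ⊆ (AddSubmonoid.closure x.support : Set G) := by
  induction n with
  | zero =>
    rw [pow_zero]
    intro g hg
    rcases eq_or_ne g 0 with rfl | hne
    · exact (AddSubmonoid.closure x.support).zero_mem
    · simp [HahnSeries.mem_support, HahnSeries.coeff_one, hne] at hg
  | succ n ih =>
    rw [pow_succ]
    intro g hg
    obtain ⟨a, ha, b, hb, rfl⟩ := HahnSeries.support_mul_subset hg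
    exact add_mem (ih ha) (AddSubmonoid.subset_closure hb)

lemma exists_pow_coeff_ne_zero (y : HahnSeries G ℕ) {g : G}
    (hg : g ∈ AddSubmonoid.closure y.support) : ∃ n : ℕ, (y ^ n).coeff g ≠ 0 := by
  induction hg using AddSubmonoid.closure_induction with
  | mem a ha => exact ⟨1, by simpa [pow_one] using ha⟩
  | zero => exact ⟨0, by simp [HahnSeries.coeff_one]⟩
  | add a b _ _ iha ihb =>
    obtain ⟨m, hm⟩ := iha
    obtain ⟨n, hn⟩ := ihb
    refine ⟨m + n, ?_⟩
    rw [pow_add, HahnSeries.coeff_mul]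
    intro h
    rw [Finset.sum_eq_zero_iff] at h
    have hmem : ((a, b) : G × G) ∈
        Finset.addAntidiagonal (y ^ m).isPWO_support (y ^ n).isPWO_support (a + b) := by
      refine Finset.mem_addAntidiagonal.mpr ?_
      exact ⟨hm, hn, rfl⟩
    exact Nat.mul_ne_zero hm hn (h _ hmem)

end RaynerAux

section RaynerAux2
variable {G : Type*} [AddCommGroup G] [LinearOrder G] [IsOrderedAddMonoid G] {k : Type*} [Semiring k]

lemma map_natCast_pow (y : HahnSeries G ℕ) (n : ℕ) :
    (y.map (Nat.castRingHom k)) ^ n = (y ^ n).map (Nat.castRingHom k) := by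
  induction n with
  | zero =>
    rw [pow_zero, pow_zero]
    exact (HahnSeries.map_one (Nat.castRingHom k).toMonoidWithZeroHom).symm
  | succ n ih =>
    rw [pow_succ, pow_succ, ih]
    exact (HahnSeries.map_mul ((Nat.castRingHom k) : ℕ →ₙ+* k)).symm

lemma map_natCast_pow_coeff (y : HahnSeries G ℕ) (n : ℕ) (g : G) :
    ((y.map (Nat.castRingHom k)) ^ n).coeff g = (((y ^ n).coeff g : ℕ) : k) := by
  rw [map_natCast_pow]; rfl

end RaynerAux2

section RaynerAux3
variable {G : Type*} [AddCommGroup G] [LinearOrder G] [IsOrderedAddMonoid G] {k : Type*} [Field k] [CharZero k]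

lemma support_map_natCast (y : HahnSeries G ℕ) :
    (y.map (Nat.castRingHom k)).support = y.support := by
  ext g
  simp [HahnSeries.mem_support, Nat.cast_eq_zero]

lemma support_hsum_powers (y : HahnSeries G ℕ)
    (hx : 0 < (y.map (Nat.castRingHom k)).orderTop) :
    (HahnSeries.SummableFamily.powers (y.map (Nat.castRingHom k))).hsum.support
      = (AddSubmonoid.closure y.support : Set G) := by
  set x : HahnSeries G k := y.map (Nat.castRingHom k) with hxdef
  apply subset_antisymm
  · intro g hg
    rw [HahnSeries.mem_support, HahnSeries.SummableFamily.coeff_hsum] at hg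
    have : ∃ n : ℕ, (x ^ n).coeff g ≠ 0 := by
      by_contra h
      push_neg at h
      exact hg (finsum_eq_zero_of_forall_eq_zero (fun n => by
        simpa [HahnSeries.SummableFamily.powers_of_orderTop_pos hx] using h n))
    obtain ⟨n, hn⟩ := this
    have := support_pow_subset_closure x n hn
    rwa [hxdef, support_map_natCast] at this
  · intro g hg
    obtain ⟨n₀, hn₀⟩ := exists_pow_coeff_ne_zero y hg
    rw [HahnSeries.mem_support, HahnSeries.SummableFamily.coeff_hsum]
    have hfun : ∀ n : ℕ, ((HahnSeries.SummableFamily.powers x) n).coeff g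
        = (((y ^ n).coeff g : ℕ) : k) := fun n => by
      rw [HahnSeries.SummableFamily.powers_of_orderTop_pos hx, map_natCast_pow_coeff]
    set f : ℕ → ℕ := fun n => (y ^ n).coeff g with hf
    have hsupp_eq : (Function.support fun n => (((f n : ℕ) : k))) = Function.support f := by
      ext n; simp [Nat.cast_eq_zero]
    have hfin : (Function.support f).Finite := by
      rw [← hsupp_eq]
      have := (HahnSeries.SummableFamily.powers x).finite_co_support g
      refine this.subset ?_
      intro n hn
      simp only [Function.mem_support] at hn
      simp only [Function.mem_support, hfun n]
      simpa using hn
    have hcast : (∑ᶠ n : ℕ, ((HahnSeries.SummableFamily.powers x) n).coeff g)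
        = ((∑ᶠ n : ℕ, f n : ℕ) : k) := by
      rw [finsum_congr hfun]
      exact (AddMonoidHom.map_finsum (Nat.castRingHom k).toAddMonoidHom hfin).symm
    rw [hcast]
    rw [Nat.cast_ne_zero]
    rw [finsum_eq_sum f hfin]
    intro hzero
    rw [Finset.sum_eq_zero_iff] at hzero
    exact hn₀ (hzero n₀ (hfin.mem_toFinset.mpr hn₀))
end RaynerAux3

lemma support_ofWF_of_ne {G : Type*} [AddCommGroup G] [LinearOrder G] [IsOrderedAddMonoid G] {R : Type*} [Zero R]
    (A : Set G) (hA : A.IsWF) (c : G → R) (hc : ∀ g, c g ≠ 0) :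
    (ofWF A hA c).support = A := by
  rw [support_ofWF]
  exact Set.inter_eq_self_of_subset_left (fun g _ => hc g)

section Main
variable {G : Type*} [AddCommGroup G] [LinearOrder G] [IsOrderedAddMonoid G] {k : Type*} [Field k] [CharZero k]

theorem raynerAux_fwd (F : Set (Set G)) (hWF : ∀ A ∈ F, A.IsWF)
    (hS2 : ∀ A ∈ F, ∀ B ⊆ A, B ∈ F)
    (hS3 : ∀ A ∈ F, ∀ B ∈ F, A ∪ B ∈ F)
    (hS5 : F.Nonempty)
    (hA3 : ∀ A ∈ F, ∀ g : G, (fun x => x + g) '' A ∈ F)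
    (hA4 : ∀ A ∈ F, A ⊆ {g : G | 0 ≤ g} → (AddSubmonoid.closure A : Set G) ∈ F) :
    (∃ K : Subfield (HahnSeries G k),
      (K : Set (HahnSeries G k)) = {a : HahnSeries G k | a.support ∈ F} ∧
      ∀ (α : k) (g : G), HahnSeries.single g α ∈ K) := by
  have hempty : (∅ : Set G) ∈ F := by
    obtain ⟨A, hA⟩ := hS5
    exact hS2 A hA ∅ (Set.empty_subset A)
  have h0 : ({0} : Set G) ∈ F := by
    have := hA4 ∅ hempty (Set.empty_subset _)
    rwa [AddSubmonoid.closure_empty, AddSubmonoid.coe_bot] at this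
  have hsing : ∀ g : G, ({g} : Set G) ∈ F := fun g => by
    have := hA3 {0} h0 g
    simpa using this
  have key_sum : ∀ A ∈ F, ∀ B ∈ F, ∃ T ∈ F, A + B ⊆ T := by
    intro A hA B hB
    rcases A.eq_empty_or_nonempty with rfl | hAne
    · exact ⟨∅, hempty, by simp⟩
    rcases B.eq_empty_or_nonempty with rfl | hBne
    · exact ⟨∅, hempty, by simp⟩
    set g := (hWF A hA).min hAne with hg
    set h := (hWF B hB).min hBne with hh
    have hA' := hA3 A hA (-g)
    have hB' := hA3 B hB (-h)
    have hC := hS3 _ hA' _ hB'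
    have hCpos : ((fun x => x + -g) '' A ∪ (fun x => x + -h) '' B) ⊆ {x : G | 0 ≤ x} := by
      rintro x (⟨a, ha, rfl⟩ | ⟨b, hb, rfl⟩)
      · simpa [Set.mem_setOf_eq, ← sub_eq_add_neg] using
          sub_nonneg.mpr ((hWF A hA).min_le hAne ha)
      · simpa [Set.mem_setOf_eq, ← sub_eq_add_neg] using
          sub_nonneg.mpr ((hWF B hB).min_le hBne hb)
    have hD := hA4 _ hC hCpos
    refine ⟨(fun x => x + (g + h)) ''
      (AddSubmonoid.closure ((fun x => x + -g) '' A ∪ (fun x => x + -h) '' B) : Set G),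
      hA3 _ hD (g + h), ?_⟩
    intro x hx
    rw [Set.mem_add] at hx
    obtain ⟨a, ha, b, hb, rfl⟩ := hx
    refine ⟨(a + -g) + (b + -h),
      add_mem (AddSubmonoid.subset_closure (Or.inl ⟨a, ha, rfl⟩))
        (AddSubmonoid.subset_closure (Or.inr ⟨b, hb, rfl⟩)), by abel⟩
  refine ⟨{ carrier := {a : HahnSeries G k | a.support ∈ F}
            zero_mem' := by simp only [Set.mem_setOf_eq, HahnSeries.support_zero]; exact hempty
            one_mem' := by
              simp only [Set.mem_setOf_eq, HahnSeries.support_one]; exact h0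
            add_mem' := fun {a b} ha hb =>
              hS2 _ (hS3 _ ha _ hb) _ (HahnSeries.support_add_subset a b)
            neg_mem' := fun {a} ha => by
              simpa only [Set.mem_setOf_eq, HahnSeries.support_neg] using ha
            mul_mem' := fun {a b} ha hb => by
              obtain ⟨T, hT, hsub⟩ := key_sum _ ha _ hb
              exact hS2 T hT _ (HahnSeries.support_mul_subset.trans hsub)
            inv_mem' := ?_ }, rfl, fun α g => hS2 _ (hsing g) _ HahnSeries.support_single_subset⟩
  intro x hx
  rcases eq_or_ne x 0 with rfl | hne
  · simpa using hx
  simp only [Set.mem_setOf_eq] at hx ⊢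
  have hlc : x.leadingCoeff ≠ 0 := HahnSeries.leadingCoeff_ne_zero.mpr hne
  have hr : (x.leadingCoeff)⁻¹ * x.leadingCoeff = 1 := inv_mul_cancel₀ hlc
  have hw := HahnSeries.unit_aux x hr (-x.order) (neg_add_cancel x.order)
  set w := 1 - HahnSeries.single (-x.order) (x.leadingCoeff)⁻¹ * x with hwdef
  clear_value w
  have hinv : x⁻¹ = HahnSeries.single (-x.order) (x.leadingCoeff)⁻¹ *
      (HahnSeries.SummableFamily.powers w).hsum := by
    apply inv_eq_of_mul_eq_one_right
    have h1 := HahnSeries.SummableFamily.one_sub_self_mul_hsum_powers hw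
    have h2 : 1 - w = HahnSeries.single (-x.order) (x.leadingCoeff)⁻¹ * x := by
      rw [hwdef]; ring
    rw [h2] at h1
    rw [← mul_assoc, mul_comm x]
    exact h1
  set o := x.order with ho
  have hE : ({0} ∪ (fun t => t + (-o)) '' x.support : Set G) ∈ F :=
    hS3 _ h0 _ (hA3 _ hx (-o))
  have hEpos : ({0} ∪ (fun t => t + (-o)) '' x.support : Set G) ⊆ {g : G | 0 ≤ g} := by
    rintro t (rfl | ⟨a, ha, rfl⟩)
    · exact le_refl 0
    · simpa [Set.mem_setOf_eq, ← sub_eq_add_neg] using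
        sub_nonneg.mpr (HahnSeries.order_le_of_coeff_ne_zero ha)
  have hclE := hA4 _ hE hEpos
  have hwsupp : w.support ⊆ ({0} ∪ (fun t => t + (-o)) '' x.support : Set G) := by
    intro t ht
    rcases eq_or_ne t 0 with rfl | htne
    · exact Or.inl rfl
    · right
      have hct : w.coeff t ≠ 0 := ht
      rw [hwdef, HahnSeries.coeff_sub, HahnSeries.coeff_one, if_neg htne, zero_sub,
        neg_ne_zero] at hct
      have hmem : t ∈ (HahnSeries.single (-o) (x.leadingCoeff)⁻¹ * x).support := hct
      obtain ⟨u, hu, v, hv, rfl⟩ := Set.mem_add.mp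
        (HahnSeries.support_mul_subset hmem)
      have hu' : u = -o := HahnSeries.eq_of_mem_support_single hu
      exact ⟨v, hv, by rw [hu']; exact add_comm v (-o)⟩
  have hpow_supp : ∀ t, (HahnSeries.SummableFamily.powers w).hsum.coeff t ≠ 0 →
      t ∈ (AddSubmonoid.closure ({0} ∪ (fun t => t + (-o)) '' x.support) : Set G) := by
    intro t htne
    rw [HahnSeries.SummableFamily.coeff_hsum] at htne
    have hex : ∃ n : ℕ, (w ^ n).coeff t ≠ 0 := by
      by_contra hcon
      push_neg at hcon
      exact htne (finsum_eq_zero_of_forall_eq_zero fun n => by simpa [HahnSeries.SummableFamily.powers_of_orderTop_pos hw] using hcon n)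
    obtain ⟨n, hn⟩ := hex
    exact (AddSubmonoid.closure_mono hwsupp) (support_pow_subset_closure w n hn)
  rw [hinv]
  refine hS2 _ (hA3 _ hclE (-o)) _ ?_
  intro t ht
  obtain ⟨u, hu, v, hv, rfl⟩ := Set.mem_add.mp (HahnSeries.support_mul_subset ht)
  have hu' : u = -o := HahnSeries.eq_of_mem_support_single hu
  exact ⟨v, hpow_supp v hv, by rw [hu']; exact add_comm v (-o)⟩

end Main

section Main2
variable {G : Type*} [AddCommGroup G] [LinearOrder G] [IsOrderedAddMonoid G] {k : Type*} [Field k] [CharZero k]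

theorem raynerAux_rev (F : Set (Set G)) (hWF : ∀ A ∈ F, A.IsWF)
    (K : Subfield (HahnSeries G k))
    (hK : (K : Set (HahnSeries G k)) = {a : HahnSeries G k | a.support ∈ F})
    (hmono : ∀ (α : k) (g : G), HahnSeries.single g α ∈ K) :
    ((∀ A ∈ F, ∀ B ⊆ A, B ∈ F) ∧
     (∀ A ∈ F, ∀ B ∈ F, A ∪ B ∈ F) ∧
     F.Nonempty ∧
     AddSubgroup.closure (⋃ A ∈ F, A) = ⊤ ∧
     (∀ A ∈ F, ∀ g : G, (fun x => x + g) '' A ∈ F) ∧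
     (∀ A ∈ F, A ⊆ {g : G | 0 ≤ g} → (AddSubmonoid.closure A : Set G) ∈ F)) := by
  have hmem : ∀ a : HahnSeries G k, a ∈ K ↔ a.support ∈ F := fun a => by
    constructor
    · intro h
      have h2 : a ∈ (K : Set (HahnSeries G k)) := h
      rwa [hK] at h2
    · intro h
      show a ∈ (K : Set (HahnSeries G k))
      rw [hK]; exact h
  -- (S2)
  have hS2 : ∀ A ∈ F, ∀ B ⊆ A, B ∈ F := by
    intro A hA B hB
    classical
    have hAwf := hWF A hA
    set u := ofWF A hAwf (fun _ => (1 : k)) with hu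
    set w := ofWF A hAwf (fun g => if g ∈ B then (2 : k) else 1) with hwdef
    have hu_mem : u ∈ K := (hmem u).mpr
      (by rw [hu, support_ofWF_of_ne A hAwf _ (fun g => one_ne_zero)]; exact hA)
    have hw_mem : w ∈ K := (hmem w).mpr
      (by
        rw [hwdef, support_ofWF_of_ne A hAwf _ ?_]
        · exact hA
        · intro g
          by_cases hg : g ∈ B <;> simp [hg])
    have hdiff : w - u ∈ K := sub_mem hw_mem hu_mem
    have hsupp : (w - u).support = B := by
      ext g
      rw [HahnSeries.mem_support, HahnSeries.coeff_sub, hu, hwdef, ofWF_coeff, ofWF_coeff]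
      by_cases hgA : g ∈ A
      · by_cases hgB : g ∈ B <;>
          norm_num [Set.indicator_of_mem hgA, hgB]
      · have hgB : g ∉ B := fun h => hgA (hB h)
        norm_num [Set.indicator_of_notMem hgA, hgB]
    have := (hmem _).mp hdiff
    rwa [hsupp] at this
  -- (S3)
  have hS3 : ∀ A ∈ F, ∀ B ∈ F, A ∪ B ∈ F := by
    intro A hA B hB
    have hAwf := hWF A hA
    have hBwf := hWF B hB
    set u := ofWF A hAwf (fun _ => (1 : k)) with hu
    set v := ofWF B hBwf (fun _ => (1 : k)) with hv
    have hsum : u + v ∈ K := add_mem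
      ((hmem u).mpr (by rw [hu, support_ofWF_of_ne A hAwf _ (fun g => one_ne_zero)]; exact hA))
      ((hmem v).mpr (by rw [hv, support_ofWF_of_ne B hBwf _ (fun g => one_ne_zero)]; exact hB))
    have hsupp : (u + v).support = A ∪ B := by
      ext g
      rw [HahnSeries.mem_support, HahnSeries.coeff_add, hu, hv, ofWF_coeff, ofWF_coeff]
      by_cases hgA : g ∈ A <;> by_cases hgB : g ∈ B <;>
        norm_num [hgA, hgB, Set.indicator_of_mem, Set.indicator_of_notMem]
    have := (hmem _).mp hsum
    rwa [hsupp] at this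
  -- singletons
  have hsing : ∀ g : G, ({g} : Set G) ∈ F := by
    intro g
    have := (hmem _).mp (hmono 1 g)
    rwa [HahnSeries.support_single_of_ne one_ne_zero] at this
  -- (S5)
  have hS5 : F.Nonempty := ⟨{0}, hsing 0⟩
  -- (A1)
  have hA1 : AddSubgroup.closure (⋃ A ∈ F, A) = ⊤ := by
    rw [eq_top_iff]
    intro g _
    exact AddSubgroup.subset_closure (Set.mem_biUnion (hsing g) rfl)
  -- (A3)
  have hA3 : ∀ A ∈ F, ∀ g : G, (fun x => x + g) '' A ∈ F := by
    intro A hA g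
    have hAwf := hWF A hA
    set u := ofWF A hAwf (fun _ => (1 : k)) with hu
    have husupp : u.support = A := by
      rw [hu]; exact support_ofWF_of_ne A hAwf _ (fun g => one_ne_zero)
    have hm : HahnSeries.single g (1 : k) * u ∈ K :=
      mul_mem (hmono 1 g) ((hmem u).mpr (by rw [husupp]; exact hA))
    have hsupp : (HahnSeries.single g (1 : k) * u).support = (fun x => x + g) '' A := by
      apply subset_antisymm
      · intro t ht
        obtain ⟨p, hp, q, hq, rfl⟩ := Set.mem_add.mp
          (HahnSeries.support_mul_subset ht)
        have hp' : p = g := HahnSeries.eq_of_mem_support_single hp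
        rw [husupp] at hq
        exact ⟨q, hq, by rw [hp']; exact add_comm q g⟩
      · rintro t ⟨a, ha, rfl⟩
        have hane : (HahnSeries.single g (1 : k) * u).coeff (a + g) ≠ 0 := by
          rw [HahnSeries.coeff_single_mul_add, one_mul]
          have : a ∈ u.support := by rw [husupp]; exact ha
          exact this
        exact hane
    have := (hmem _).mp hm
    rwa [hsupp] at this
  -- (A4)
  have hA4 : ∀ A ∈ F, A ⊆ {g : G | 0 ≤ g} → (AddSubmonoid.closure A : Set G) ∈ F := by
    intro A hA hApos
    have hA' : A \ {0} ∈ F := hS2 A hA _ Set.diff_subset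
    set y : HahnSeries G ℕ := ofWF (A \ {0}) (hWF _ hA') (fun _ => (1 : ℕ)) with hy
    have hysupp : y.support = A \ {0} := by
      rw [hy]; exact support_ofWF_of_ne _ _ _ (fun g => one_ne_zero)
    have hxsupp : (y.map (Nat.castRingHom k)).support = A \ {0} := by
      rw [support_map_natCast, hysupp]
    have hxpos : 0 < (y.map (Nat.castRingHom k)).orderTop := by
      rcases eq_or_ne (y.map (Nat.castRingHom k)) 0 with h | h
      · rw [h, HahnSeries.orderTop_zero]; exact WithTop.top_pos
      · rw [HahnSeries.orderTop_of_ne_zero h]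
        have hmin' : (y.map (Nat.castRingHom k)).isWF_support.min
            (HahnSeries.support_nonempty_iff.2 h) ∈ A \ {0} := by
          rw [← hxsupp]
          exact (y.map (Nat.castRingHom k)).isWF_support.min_mem
            (HahnSeries.support_nonempty_iff.2 h)
        exact_mod_cast lt_of_le_of_ne (hApos hmin'.1) (Ne.symm hmin'.2)
    have hx_mem : y.map (Nat.castRingHom k) ∈ K := (hmem _).mpr (by rw [hxsupp]; exact hA')
    have hw_mem : (1 : HahnSeries G k) - y.map (Nat.castRingHom k) ∈ K :=
      sub_mem (one_mem K) hx_mem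
    have hinv_mem : ((1 : HahnSeries G k) - y.map (Nat.castRingHom k))⁻¹ ∈ K :=
      K.inv_mem hw_mem
    have hinv_eq : ((1 : HahnSeries G k) - y.map (Nat.castRingHom k))⁻¹ =
        (HahnSeries.SummableFamily.powers (y.map (Nat.castRingHom k))).hsum :=
      inv_eq_of_mul_eq_one_right (HahnSeries.SummableFamily.one_sub_self_mul_hsum_powers hxpos)
    have hcl : AddSubmonoid.closure (A \ {0}) = AddSubmonoid.closure A :=
      le_antisymm (AddSubmonoid.closure_mono Set.diff_subset)
        ((AddSubmonoid.closure_le).2 (fun a ha => by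
          rcases eq_or_ne a 0 with rfl | hne
          · exact zero_mem _
          · exact AddSubmonoid.subset_closure ⟨ha, hne⟩))
    have hfin := (hmem _).mp hinv_mem
    rw [hinv_eq, support_hsum_powers y hxpos, hysupp] at hfin
    rwa [hcl] at hfin
  exact ⟨hS2, hS3, hS5, hA1, hA3, hA4⟩

end Main2


/-- Suppose `char k = 0`. Then the `k`-hull `k((F))` is a Rayner field
(i.e. `F` satisfies (S2) subset closure, (S3) union closure, (S5) nonemptiness, (A1) the
members of `F` generate `G`, (A3) translation closure and (A4) finite-sum closure for
members contained in `G^{≥0}`) if and only if `k((F))` is a Hahn field in `k((G))`, i.e.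
a subfield containing all monomials `α t^g`. -/
theorem rayner_iff_hahnField_charZero
    {G : Type*} [AddCommGroup G] [LinearOrder G] [IsOrderedAddMonoid G] {k : Type*} [Field k] [CharZero k]
    (F : Set (Set G)) (hWF : ∀ A ∈ F, A.IsWF) :
    ((∀ A ∈ F, ∀ B ⊆ A, B ∈ F) ∧
     (∀ A ∈ F, ∀ B ∈ F, A ∪ B ∈ F) ∧
     F.Nonempty ∧
     AddSubgroup.closure (⋃ A ∈ F, A) = ⊤ ∧
     (∀ A ∈ F, ∀ g : G, (fun x => x + g) '' A ∈ F) ∧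
     (∀ A ∈ F, A ⊆ {g : G | 0 ≤ g} → (AddSubmonoid.closure A : Set G) ∈ F)) ↔
    (∃ K : Subfield (HahnSeries G k),
      (K : Set (HahnSeries G k)) = {a : HahnSeries G k | a.support ∈ F} ∧
      ∀ (α : k) (g : G), HahnSeries.single g α ∈ K) := by
  constructor
  · rintro ⟨hS2, hS3, hS5, -, hA3, hA4⟩
    exact raynerAux_fwd F hWF hS2 hS3 hS5 hA3 hA4
  · rintro ⟨K, hK, hmono⟩
    exact raynerAux_rev F hWF K hK hmono
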